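/- The subring ℤ + xℚ[x] of ℚ[x] is not atomic; in particular the element x does not factor into irreducibles in ℤ + xℚ[x]. -/

import Mathlib

/-- An integral domain (here: commutative ring) is atomic if every nonzero nonunit
is a finite product of irreducible elements. -/
def AtomicRing (R : Type*) [CommRing R] : Prop :=
  ∀ a : R, a ≠ 0 → ¬IsUnit a →
    ∃ l : Multiset R, (∀ b ∈ l, Irreducible b) ∧ l.prod = a

/-- A ring satisfies the ascending chain condition on principal ideals (ACCP) if
every ascending chain of principal ideals stabilizes. -/
def RingACCP (R : Type*) [CommRing R] : Prop :=
  ∀ f : ℕ → R, (∀ n, Ideal.span {f n} ≤ Ideal.span {f (n + 1)}) →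
    ∃ N, ∀ n, N ≤ n → Ideal.span {f n} = Ideal.span {f N}

open Polynomial in
/-- The subring ℤ + xℚ[x] of ℚ[x]: rational polynomials with integer constant term. -/
noncomputable def ZplusXQX : Subring (Polynomial ℚ) where
  carrier := {f | ∃ n : ℤ, f.coeff 0 = (n : ℚ)}
  mul_mem' := by
    rintro f g ⟨a, ha⟩ ⟨b, hb⟩
    exact ⟨a * b, by rw [Polynomial.mul_coeff_zero, ha, hb]; push_cast; ring⟩
  one_mem' := ⟨1, by simp⟩
  add_mem' := by
    rintro f g ⟨a, ha⟩ ⟨b, hb⟩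
    exact ⟨a + b, by simp [ha, hb]⟩
  zero_mem' := ⟨0, by simp⟩
  neg_mem' := by
    rintro f ⟨a, ha⟩
    exact ⟨-a, by simp [ha]⟩

/-- ℤ + xℚ[x] is not atomic; in particular x has no factorization into irreducibles. -/
theorem ZplusXQX_not_atomic :
    ¬ AtomicRing ZplusXQX ∧
    ¬ ∃ l : Multiset ZplusXQX, (∀ b ∈ l, Irreducible b) ∧
        l.prod = ⟨Polynomial.X, ⟨0, by simp⟩⟩ := by
  have two_nonunit : ¬ IsUnit (2 : ZplusXQX) := by
    rw [isUnit_iff_exists_inv]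
    rintro ⟨v, hv⟩
    have hv' : (2 : Polynomial ℚ) * (v : Polynomial ℚ) = 1 := by
      exact congrArg Subtype.val hv
    have h0 : (2 : ℚ) * (v : Polynomial ℚ).coeff 0 = 1 := by
      have := congrArg (fun p => Polynomial.coeff p 0) hv'
      simpa [Polynomial.mul_coeff_zero] using this
    obtain ⟨n, hn⟩ := v.2
    rw [hn] at h0
    have : (2 * n : ℤ) = 1 := by exact_mod_cast h0
    omega
  have key : ¬ ∃ l : Multiset ZplusXQX, (∀ b ∈ l, Irreducible b) ∧
      l.prod = ⟨Polynomial.X, ⟨0, by simp⟩⟩ := by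
    rintro ⟨l, hirr, hprod⟩
    have hcoe : ((l.map (ZplusXQX.subtype)).prod : Polynomial ℚ) = Polynomial.X := by
      rw [← map_multiset_prod, hprod]; rfl
    have hX : Prime (Polynomial.X : Polynomial ℚ) := Polynomial.prime_X
    obtain ⟨b, hb, hdvd⟩ := hX.exists_mem_multiset_dvd (dvd_of_eq hcoe.symm)
    obtain ⟨a, ha, hab⟩ := Multiset.mem_map.mp hb
    rw [← hab] at hdvd
    obtain ⟨c, hc⟩ := hdvd
    have hc' : (a : Polynomial ℚ) = Polynomial.X * c := hc
    have hadvd : a ∣ l.prod := Multiset.dvd_prod ha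
    rw [hprod] at hadvd
    obtain ⟨d, hd⟩ := hadvd
    have hd' : (Polynomial.X : Polynomial ℚ) = (a : Polynomial ℚ) * (d : Polynomial ℚ) := by
      simpa using congrArg Subtype.val hd
    have hcd : c * (d : Polynomial ℚ) = 1 := by
      have h1 : Polynomial.X * (c * (d : Polynomial ℚ)) = Polynomial.X * 1 := by
        rw [mul_one]
        conv_rhs => rw [hd', hc']
        ring
      exact mul_left_cancel₀ Polynomial.X_ne_zero h1
    have hcu : IsUnit c := IsUnit.of_mul_eq_one _ hcd
    obtain ⟨r, hr, hCr⟩ := Polynomial.isUnit_iff.mp hcu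
    set b' : ZplusXQX := ⟨Polynomial.X * Polynomial.C (r/2), ⟨0, by
      simp [Polynomial.mul_coeff_zero]⟩⟩ with hb'def
    have h2C : (2 : Polynomial ℚ) * Polynomial.C (r/2) = Polynomial.C r := by
      rw [← map_ofNat Polynomial.C 2, ← Polynomial.C_mul]
      congr 1
      ring
    have hfac : a = 2 * b' := by
      apply Subtype.ext
      have hav : (a : Polynomial ℚ) = Polynomial.X * Polynomial.C r := by
        rw [hc', ← hCr]
      show (a : Polynomial ℚ) = (2 : Polynomial ℚ) * (Polynomial.X * Polynomial.C (r/2))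
      rw [hav, ← h2C]; ring
    have b'_nonunit : ¬ IsUnit b' := by
      rw [isUnit_iff_exists_inv]
      rintro ⟨v, hv⟩
      have hv' : (b' : Polynomial ℚ) * (v : Polynomial ℚ) = 1 := by
        simpa using congrArg Subtype.val hv
      have := congrArg (fun p => Polynomial.coeff p 0) hv'
      simp [hb'def, Polynomial.mul_coeff_zero] at this
    rcases (hirr a ha).2 hfac with h | h
    · exact two_nonunit h
    · exact b'_nonunit h
  refine ⟨?_, key⟩
  intro hA
  have hne : (⟨Polynomial.X, ⟨0, by simp⟩⟩ : ZplusXQX) ≠ 0 := by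
    intro h
    exact Polynomial.X_ne_zero (congrArg Subtype.val h)
  have hnu : ¬ IsUnit (⟨Polynomial.X, ⟨0, by simp⟩⟩ : ZplusXQX) := by
    intro h
    exact Polynomial.not_isUnit_X (h.map ZplusXQX.subtype)
  obtain ⟨l, h1, h2⟩ := hA _ hne hnu
  exact key ⟨l, h1, h2⟩
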